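/- Let G be a finitely generated group and H a finite-index subgroup. If G is strongly periodic, then H is strongly periodic. -/

import Mathlib

/-- The left shift action of a group `G` on configurations `G → A`:
`(g • x)(k) = x (g⁻¹ * k)`. -/
def shiftAct {G A : Type*} [Group G] (g : G) (x : G → A) : G → A :=
  fun k => x (g⁻¹ * k)

/-- A pattern: a function from a finite subset of `G` to the alphabet `A`. -/
structure Pattern (G A : Type*) where
  supp : Finset G
  val : supp → A

/-- A pattern `p` appears in a configuration `x` if some shift of `x` restricts to `p`. -/
def Pattern.appears {G A : Type*} [Group G] (p : Pattern G A) (x : G → A) : Prop :=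
  ∃ g : G, ∀ w : p.supp, shiftAct g x w = p.val w

/-- The shift space defined by a set of forbidden patterns. -/
def avoids {G A : Type*} [Group G] (P : Set (Pattern G A)) : Set (G → A) :=
  {x | ∀ p ∈ P, ¬ p.appears x}

/-- A subset of `A^G` is a shift of finite type if it is defined by a finite set
of forbidden patterns. -/
def IsSFT {G A : Type*} [Group G] (S : Set (G → A)) : Prop :=
  ∃ P : Set (Pattern G A), P.Finite ∧ S = avoids P

/-- The stabilizer of a configuration under the shift action, as a subgroup. -/
def stab {G A : Type*} [Group G] (x : G → A) : Subgroup G where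
  carrier := {g | shiftAct g x = x}
  one_mem' := by
    funext k
    simp [shiftAct]
  mul_mem' := by
    intro a b ha hb
    simp only [Set.mem_setOf_eq] at ha hb ⊢
    funext k
    have h1 : x (b⁻¹ * (a⁻¹ * k)) = x (a⁻¹ * k) := congrFun hb (a⁻¹ * k)
    have h2 : x (a⁻¹ * k) = x k := congrFun ha k
    show x ((a * b)⁻¹ * k) = x k
    rw [mul_inv_rev, mul_assoc]
    exact h1.trans h2
  inv_mem' := by
    intro a ha
    simp only [Set.mem_setOf_eq] at ha ⊢
    funext k
    have := congrFun ha (a * k)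
    simp only [shiftAct, inv_mul_cancel_left] at this
    show x (a⁻¹⁻¹ * k) = x k
    rw [inv_inv]
    exact this.symm

/-- A group is weakly periodic if every nonempty SFT over it contains a configuration
with nontrivial stabilizer. -/
def WeaklyPeriodic (G : Type*) [Group G] : Prop :=
  ∀ (A : Type) [Fintype A] (P : Set (Pattern G A)), P.Finite →
    (avoids P).Nonempty → ∃ x ∈ avoids P, ∃ g : G, g ≠ 1 ∧ shiftAct g x = x

/-- A group is strongly periodic if every nonempty SFT over it contains a configuration
whose stabilizer has finite index. -/
def StronglyPeriodic (G : Type*) [Group G] : Prop :=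
  ∀ (A : Type) [Fintype A] (P : Set (Pattern G A)), P.Finite →
    (avoids P).Nonempty → ∃ x ∈ avoids P, (stab x).FiniteIndex


section Aux

variable {G : Type*} [Group G] {H : Subgroup G} {A : Type*}

/-- Embedding of the subgroup into the group. -/
def subEmb (H : Subgroup G) : H ↪ G := ⟨Subtype.val, Subtype.val_injective⟩

lemma mem_of_mem_map_sub {S : Finset H} {w : G}
    (hw : w ∈ S.map (subEmb H)) : ∃ h : w ∈ H, (⟨w, h⟩ : H) ∈ S := by
  obtain ⟨a, ha, hae⟩ := Finset.mem_map.mp hw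
  subst hae
  exact ⟨a.2, ha⟩

/-- Lift a pattern over the subgroup `H` to a pattern over `G`. -/
def liftPattern (p : Pattern H A) : Pattern G A where
  supp := p.supp.map (subEmb H)
  val := fun w => p.val ⟨⟨w.1, (mem_of_mem_map_sub w.2).choose⟩,
    (mem_of_mem_map_sub w.2).choose_spec⟩

lemma liftPattern_val (p : Pattern H A) (w : (liftPattern p).supp)
    (u : p.supp) (h : (u : G) = w.1) : (liftPattern p).val w = p.val u := by
  have : (⟨⟨w.1, (mem_of_mem_map_sub w.2).choose⟩,
      (mem_of_mem_map_sub w.2).choose_spec⟩ : p.supp) = u := by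
    apply Subtype.ext; apply Subtype.ext; exact h.symm
  simpa [liftPattern] using congrArg p.val this

lemma mem_liftPattern_supp (p : Pattern H A) (u : p.supp) :
    (u : G) ∈ (liftPattern p).supp :=
  Finset.mem_map.mpr ⟨u.1, u.2, rfl⟩

end Aux

/-- If `G` is finitely generated and strongly periodic and `H` is a
finite-index subgroup, then `H` is strongly periodic. -/
theorem strongly_periodic_finite_index_hereditary {G : Type*} [Group G]
    (hfg : Group.FG G) (H : Subgroup G) [H.FiniteIndex]
    (hG : StronglyPeriodic G) : StronglyPeriodic H := by
  intro A _ P hPfin hPne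
  classical
  set Q : Set (Pattern G A) := liftPattern '' P with hQ
  have hQfin : Q.Finite := hPfin.image _
  -- Key: if the lift of p appears in z : G → A restricted suitably, then p appears.
  -- Nonemptiness of avoids Q
  obtain ⟨x, hx⟩ := hPne
  have hQne : (avoids Q).Nonempty := by
    refine ⟨fun g => x ⟨((QuotientGroup.mk g : G ⧸ H).out)⁻¹ * g,
      QuotientGroup.eq.mp (QuotientGroup.out_eq' _)⟩, ?_⟩
    rintro q ⟨p, hpP, rfl⟩ ⟨g, hg⟩
    set t : G := (QuotientGroup.mk (g⁻¹ : G) : G ⧸ H).out with ht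
    have htmem : t⁻¹ * g⁻¹ ∈ H := QuotientGroup.eq.mp (QuotientGroup.out_eq' _)
    set h0 : H := ⟨t⁻¹ * g⁻¹, htmem⟩ with hh0
    refine hx p hpP ⟨h0⁻¹, fun u => ?_⟩
    have hu := hg ⟨(u : G), mem_liftPattern_supp p u⟩
    rw [liftPattern_val p _ u rfl] at hu
    have hmk : (QuotientGroup.mk (g⁻¹ * (u : G)) : G ⧸ H) = QuotientGroup.mk g⁻¹ :=
      (QuotientGroup.eq.mpr (by simpa using (mul_mem (inv_mem (u : H).2) u.1.2))).symm
    have hrep : ((QuotientGroup.mk (g⁻¹ * (u : G)) : G ⧸ H).out)⁻¹ * (g⁻¹ * (u : G))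
        = ((h0 * u : H) : G) := by
      rw [hmk]; simp [hh0, mul_assoc]; exact ht.symm
    have : x ⟨_, _⟩ = p.val u := hu
    rw [show (⟨((QuotientGroup.mk (g⁻¹ * (u : G)) : G ⧸ H).out)⁻¹ * (g⁻¹ * (u : G)),
        QuotientGroup.eq.mp (QuotientGroup.out_eq' _)⟩ : H) = h0 * (u : H) from
      Subtype.ext hrep] at this
    simpa [shiftAct] using this
  obtain ⟨z, hzQ, hzfi⟩ := hG A Q hQfin hQne
  refine ⟨fun h => z (h : G), ?_, ?_⟩
  · -- avoids P
    rintro p hpP ⟨h, hh⟩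
    refine hzQ (liftPattern p) ⟨p, hpP, rfl⟩ ⟨(h : G), fun w => ?_⟩
    obtain ⟨hw1, hw2⟩ := mem_of_mem_map_sub w.2
    set u : p.supp := ⟨⟨w.1, hw1⟩, hw2⟩ with hu
    rw [liftPattern_val p w u rfl]
    have := hh u
    simpa [shiftAct] using this
  · -- finite index stabilizer
    have hle : (stab z).subgroupOf H ≤ stab (fun h : H => z (h : G)) := by
      intro k hk
      have hk' : shiftAct (k : G) z = z := hk
      funext h
      have := congrFun hk' ((k : G)⁻¹ * (h : G))
      simp only [shiftAct] at this ⊢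
      calc z (((k⁻¹ * h : H) : G)) = z ((k : G)⁻¹ * (h : G)) := rfl
        _ = z (h : G) := congrFun hk' (h : G)
    haveI : ((stab z).subgroupOf H).FiniteIndex :=
      Subgroup.instFiniteIndex_subgroupOf _ _
    exact Subgroup.finiteIndex_of_le hle
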